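/- There is a PVC instance and an optimal solution of its LP relaxation RPVC assigning value 0 to a vertex v, such that every optimal integral solution of the PVC instance assigns positive power to v. Concretely: take edges (u_1,v_1) and (u_2,v_2) of weight 2 and a vertex v joined to all four vertices by weight-1 edges; then the fractional optimum is 4 (assigning 1 to u_1,v_1,u_2,v_2 and 0 to v), while every optimal integral solution has value 5 and assigns p_v ≥ 1. -/

import Mathlib

/-- The concrete PVC instance on vertices `u₁,v₁,u₂,v₂,v` (indexed `0,1,2,3,4`):
edges `(u₁,v₁)` and `(u₂,v₂)` of weight 2, and edges from `v` to the other four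
vertices of weight 1. Fractional feasibility for the LP relaxation RPVC. -/
def fracFeas (x : Fin 5 → ℝ) : Prop :=
  (∀ i, 0 ≤ x i) ∧ 2 ≤ x 0 + x 1 ∧ 2 ≤ x 2 + x 3 ∧
  1 ≤ x 4 + x 0 ∧ 1 ≤ x 4 + x 1 ∧ 1 ≤ x 4 + x 2 ∧ 1 ≤ x 4 + x 3

/-- Integral feasibility for the same PVC instance. -/
def intFeas (p : Fin 5 → ℕ) : Prop :=
  (2 ≤ p 0 ∨ 2 ≤ p 1) ∧ (2 ≤ p 2 ∨ 2 ≤ p 3) ∧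
  (1 ≤ p 4 ∨ 1 ≤ p 0) ∧ (1 ≤ p 4 ∨ 1 ≤ p 1) ∧
  (1 ≤ p 4 ∨ 1 ≤ p 2) ∧ (1 ≤ p 4 ∨ 1 ≤ p 3)

/-- The vector `(1,1,1,1,0)` is an optimal fractional solution (value 4) assigning 0
to `v`, while every optimal integral solution has value 5 and assigns `p v ≥ 1`. -/
theorem stmt_15 :
    fracFeas ![1, 1, 1, 1, 0] ∧
    (∑ i, (![1, 1, 1, 1, 0] : Fin 5 → ℝ) i) = 4 ∧
    (∀ x : Fin 5 → ℝ, fracFeas x → 4 ≤ ∑ i, x i) ∧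
    (∀ p : Fin 5 → ℕ, intFeas p → 5 ≤ ∑ i, p i) ∧
    (∃ p : Fin 5 → ℕ, intFeas p ∧ ∑ i, p i = 5) ∧
    (∀ p : Fin 5 → ℕ, intFeas p → ∑ i, p i = 5 → 1 ≤ p 4) := by
  refine ⟨?_, ?_, ?_, ?_, ?_, ?_⟩
  · refine ⟨fun i => ?_, by simp only [Matrix.cons_val]; norm_num, by simp only [Matrix.cons_val]; norm_num,
      by simp only [Matrix.cons_val]; norm_num, by simp only [Matrix.cons_val]; norm_num, by simp only [Matrix.cons_val]; norm_num,
      by simp only [Matrix.cons_val]; norm_num⟩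
    fin_cases i <;> norm_num
  · simp only [Fin.sum_univ_five, Matrix.cons_val]; norm_num
  · intro x ⟨hpos, h1, h2, _⟩
    have := hpos 4
    simp [Fin.sum_univ_five]
    linarith
  · intro p ⟨a, b, c, d, e, f⟩
    simp [Fin.sum_univ_five]
    omega
  · exact ⟨![2, 0, 2, 0, 1], ⟨Or.inl le_rfl, Or.inl le_rfl, Or.inl le_rfl, Or.inl le_rfl,
      Or.inl le_rfl, Or.inl le_rfl⟩, by simp [Fin.sum_univ_five]⟩
  · intro p ⟨a, b, c, d, e, f⟩ hsum
    simp [Fin.sum_univ_five] at hsum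
    omega
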